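/- There exists a measurable radial weight λ on the unit disc 𝔻 ⊂ ℂ with 1/C ≤ λ ≤ C for some C > 0 such that the weighted Bergman kernel B_λ(z,w) = ∑_{n≥0} α_n (z w̄)^n, where α_n = 1/(2π ∫₀¹ r^{2n+1} λ(r) dr), has a zero in 𝔻 × 𝔻. -/

import Mathlib

open MeasureTheory Real intervalIntegral

noncomputable def lamW : ℝ → ℝ := fun r => if r ≤ 1/10 then 91 else 1

lemma lamW_meas : Measurable lamW :=
  Measurable.ite measurableSet_Iic measurable_const measurable_const

lemma lamW_int (n : ℕ) :
    ∫ r in (0:ℝ)..1, r ^ (2*n+1) * lamW r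
      = (1 + 90*(1/100:ℝ)^(n+1)) / (2*(n:ℝ)+2) := by
  have hc : Continuous fun r : ℝ => r ^ (2*n+1) * (91:ℝ) := by continuity
  have hc2 : Continuous fun r : ℝ => r ^ (2*n+1) * (1:ℝ) := by continuity
  have e1' : ∀ᵐ r ∂(volume : Measure ℝ), r ∈ Set.uIoc (0:ℝ) (1/10) →
      r ^ (2*n+1) * lamW r = r ^ (2*n+1) * (91:ℝ) := by
    refine Filter.Eventually.of_forall fun r hr => ?_
    rw [Set.uIoc_of_le (by norm_num)] at hr
    simp only [lamW, if_pos hr.2]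
  have e2' : ∀ᵐ r ∂(volume : Measure ℝ), r ∈ Set.uIoc (1/10:ℝ) 1 →
      r ^ (2*n+1) * lamW r = r ^ (2*n+1) * (1:ℝ) := by
    refine Filter.Eventually.of_forall fun r hr => ?_
    rw [Set.uIoc_of_le (by norm_num)] at hr
    simp only [lamW, if_neg (not_le.mpr hr.1)]
  have e1 : ∀ᵐ r ∂(volume.restrict (Set.uIoc (0:ℝ) (1/10))),
      (fun r : ℝ => r ^ (2*n+1) * (91:ℝ)) r = r ^ (2*n+1) * lamW r := by
    refine (ae_restrict_iff' measurableSet_uIoc).mpr (Filter.Eventually.of_forall fun r hr => ?_)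
    rw [Set.uIoc_of_le (by norm_num)] at hr
    simp only [lamW, if_pos hr.2]
  have e2 : ∀ᵐ r ∂(volume.restrict (Set.uIoc (1/10:ℝ) 1)),
      (fun r : ℝ => r ^ (2*n+1) * (1:ℝ)) r = r ^ (2*n+1) * lamW r := by
    refine (ae_restrict_iff' measurableSet_uIoc).mpr (Filter.Eventually.of_forall fun r hr => ?_)
    rw [Set.uIoc_of_le (by norm_num)] at hr
    simp only [lamW, if_neg (not_le.mpr hr.1)]
  have hi1 : IntervalIntegrable (fun r : ℝ => r ^ (2*n+1) * lamW r) volume 0 (1/10) :=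
    (hc.intervalIntegrable _ _).congr_ae e1
  have hi2 : IntervalIntegrable (fun r : ℝ => r ^ (2*n+1) * lamW r) volume (1/10) 1 :=
    (hc2.intervalIntegrable _ _).congr_ae e2
  have split := integral_add_adjacent_intervals hi1 hi2
  have hpow : ((1/10:ℝ))^(2*n+1+1) = (1/100:ℝ)^(n+1) := by
    rw [show 2*n+1+1 = 2*(n+1) by ring, pow_mul]; norm_num
  have v1 : ∫ r in (0:ℝ)..(1/10), r ^ (2*n+1) * lamW r
      = 91 * (1/100:ℝ)^(n+1) / (2*(n:ℝ)+2) := by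
    rw [integral_congr_ae e1', intervalIntegral.integral_mul_const, integral_pow, hpow]
    push_cast
    ring
  have v2 : ∫ r in (1/10:ℝ)..1, r ^ (2*n+1) * lamW r
      = (1 - (1/100:ℝ)^(n+1)) / (2*(n:ℝ)+2) := by
    rw [integral_congr_ae e2', intervalIntegral.integral_mul_const, integral_pow, hpow]
    push_cast
    ring
  rw [← split, v1, v2]
  have h2 : (2*(n:ℝ)+2) ≠ 0 := by positivity
  field_simp
  ring

noncomputable def ddW (n : ℕ) : ℝ := 1 + 90 * (1/100:ℝ)^(n+1)

lemma ddW_pos (n : ℕ) : 0 < ddW n := by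
  have : (0:ℝ) < (1/100)^(n+1) := by positivity
  unfold ddW; nlinarith

lemma one_le_ddW (n : ℕ) : 1 ≤ ddW n := by
  have : (0:ℝ) < (1/100)^(n+1) := by positivity
  unfold ddW; nlinarith

noncomputable def ggW (s : ℝ) : ℝ := ∑' n : ℕ, ((n:ℝ)+1) / (π * ddW n) * (-s)^n

lemma summable_np1_geo {q : ℝ} (hq : |q| < 1) :
    Summable (fun n : ℕ => ((n:ℝ)+1) * q^n) := by
  have h1 : Summable (fun n : ℕ => (n:ℝ) * q^n) := by
    have := summable_pow_mul_geometric_of_norm_lt_one (R := ℝ) 1 (by rwa [Real.norm_eq_abs])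
    simpa using this
  have h2 : Summable (fun n : ℕ => q^n) :=
    summable_geometric_of_norm_lt_one (by rwa [Real.norm_eq_abs])
  simpa [add_mul] using h1.add h2

lemma hasSum_np1_geo {q : ℝ} (hq : |q| < 1) :
    HasSum (fun n : ℕ => ((n:ℝ)+1) * q^n) (1/(1-q)^2) := by
  have hn : ‖q‖ < 1 := by rwa [Real.norm_eq_abs]
  have h1 : HasSum (fun n : ℕ => (n:ℝ) * q^n) (q/(1-q)^2) :=
    hasSum_coe_mul_geometric_of_norm_lt_one hn
  have h2 : HasSum (fun n : ℕ => q^n) (1-q)⁻¹ := hasSum_geometric_of_norm_lt_one hn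
  have h := h1.add h2
  have hq1 : (1:ℝ) - q ≠ 0 := by
    have := abs_lt.mp hq; intro h0; nlinarith [this.2]
  convert h using 1
  · ext n; ring
  · field_simp; ring

lemma ggW_bound (n : ℕ) (x : ℝ) (hx : x ∈ Set.Icc (0:ℝ) (9/10)) :
    ‖((n:ℝ)+1) / (π * ddW n) * (-x)^n‖ ≤ ((n:ℝ)+1) * (9/10)^n := by
  have hd := one_le_ddW n
  have hπ : (1:ℝ) ≤ π := by nlinarith [Real.pi_gt_three]
  have h1 : (1:ℝ) ≤ π * ddW n := by nlinarith
  rw [Real.norm_eq_abs, abs_mul, abs_div, abs_pow, abs_neg]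
  have hxa : |x| ≤ 9/10 := by
    rw [abs_of_nonneg hx.1]; exact hx.2
  have h2 : |((n:ℝ)+1)| = (n:ℝ)+1 := abs_of_nonneg (by positivity)
  have h3 : |π * ddW n| = π * ddW n := abs_of_nonneg (by nlinarith)
  rw [h2, h3]
  have h4 : ((n:ℝ)+1) / (π * ddW n) ≤ (n:ℝ)+1 := by
    rw [div_le_iff₀ (by nlinarith)]; nlinarith [Nat.cast_nonneg (α := ℝ) n]
  have h5 : |x|^n ≤ (9/10:ℝ)^n := pow_le_pow_left₀ (abs_nonneg x) hxa n
  have h6 : (0:ℝ) ≤ |x|^n := by positivity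
  have h7 : (0:ℝ) ≤ ((n:ℝ)+1) / (π * ddW n) := by positivity
  calc ((n:ℝ)+1) / (π * ddW n) * |x|^n ≤ ((n:ℝ)+1) * |x|^n := by
        exact mul_le_mul_of_nonneg_right h4 h6
    _ ≤ ((n:ℝ)+1) * (9/10)^n := by
        exact mul_le_mul_of_nonneg_left h5 (by positivity)

lemma ggW_cont : ContinuousOn ggW (Set.Icc (0:ℝ) (9/10)) := by
  apply continuousOn_tsum (u := fun n : ℕ => ((n:ℝ)+1) * (9/10)^n)
  · intro n
    exact (Continuous.continuousOn (by continuity))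
  · exact summable_np1_geo (by rw [abs_of_nonneg (by norm_num : (0:ℝ) ≤ 9/10)]; norm_num)
  · exact fun n x hx => ggW_bound n x hx

lemma ggW_zero_pos : 0 < ggW 0 := by
  have h0 : ggW 0 = 1 / (π * ddW 0) := by
    unfold ggW
    rw [tsum_eq_single 0]
    · norm_num
    · intro n hn
      simp [zero_pow hn]
  rw [h0]
  have := ddW_pos 0
  positivity

noncomputable def ttW (n : ℕ) : ℝ :=
  ((n:ℝ)+1) * (-(9/10:ℝ))^n * (90 * (1/100:ℝ)^(n+1) / ddW n)

lemma ttW_abs_le (n : ℕ) : |ttW n| ≤ ((n:ℝ)+1) * (9/1000:ℝ)^n * (9/10) := by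
  have hd := one_le_ddW n
  unfold ttW
  rw [abs_mul, abs_mul, abs_div, abs_pow, abs_neg]
  have h1 : |((n:ℝ)+1)| = (n:ℝ)+1 := abs_of_nonneg (by positivity)
  have h2 : |(9/10:ℝ)| = 9/10 := abs_of_nonneg (by norm_num)
  have h3 : |(1/100:ℝ)| = 1/100 := abs_of_nonneg (by norm_num)
  have h4 : |(90:ℝ) * (1/100)^(n+1)| = 90 * (1/100)^(n+1) := abs_of_nonneg (by positivity)
  have h5 : |ddW n| = ddW n := abs_of_nonneg (le_of_lt (ddW_pos n))
  rw [h1, h2, h4, h5]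
  have h6 : 90 * (1/100:ℝ)^(n+1) / ddW n ≤ 90 * (1/100)^(n+1) := by
    rw [div_le_iff₀ (ddW_pos n)]
    nlinarith [pow_pos (show (0:ℝ) < 1/100 by norm_num) (n+1), ddW_pos n]
  calc ((n:ℝ)+1) * (9/10)^n * (90 * (1/100)^(n+1) / ddW n)
      ≤ ((n:ℝ)+1) * (9/10)^n * (90 * (1/100)^(n+1)) := by
        apply mul_le_mul_of_nonneg_left h6 (by positivity)
    _ = ((n:ℝ)+1) * (9/1000)^n * (9/10) := by
        rw [pow_succ]
        have : (9/10:ℝ)^n * (1/100)^n = (9/1000)^n := by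
          rw [← mul_pow]; norm_num
        ring_nf
        nlinarith [this]

lemma ttW_summable : Summable ttW := by
  apply Summable.of_abs
  apply Summable.of_nonneg_of_le (fun n => abs_nonneg _) ttW_abs_le
  exact ((summable_np1_geo (q := 9/1000)
    (by rw [abs_of_nonneg (by norm_num : (0:ℝ) ≤ 9/1000)]; norm_num)).mul_right _)

lemma ttW_zero : ttW 0 = 9/19 := by
  unfold ttW ddW
  norm_num

lemma ttW_tail_hasSum :
    HasSum (fun n : ℕ => ((n:ℝ)+1+1) * (9/1000:ℝ)^(n+1) * (9/10))
      ((1/(1-(9/1000:ℝ))^2 - 1) * (9/10)) := by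
  have h := hasSum_np1_geo (q := 9/1000)
    (by rw [abs_of_nonneg (by norm_num : (0:ℝ) ≤ 9/1000)]; norm_num)
  have h2 := (hasSum_nat_add_iff' (f := fun n : ℕ => ((n:ℝ)+1) * (9/1000:ℝ)^n) 1).mpr h
  have h3 := h2.mul_right (9/10)
  convert h3 using 2 with n
  · rfl
  · push_cast; ring
  · simp

lemma ttW_sum_lb : 9/19 - (1/(1-(9/1000:ℝ))^2 - 1) * (9/10) ≤ ∑' n, ttW n := by
  have hsum := ttW_summable
  rw [Summable.tsum_eq_zero_add hsum, ttW_zero]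
  have htail : Summable (fun n => ttW (n+1)) := by
    exact (summable_nat_add_iff 1).mpr hsum
  have hb := ttW_tail_hasSum
  have hle : ∀ n : ℕ, -(((n:ℝ)+1+1) * (9/1000:ℝ)^(n+1) * (9/10)) ≤ ttW (n+1) := by
    intro n
    have := ttW_abs_le (n+1)
    have h2 := neg_abs_le (ttW (n+1))
    push_cast at this ⊢
    nlinarith
  have := Summable.tsum_le_tsum hle hb.neg.summable htail
  rw [hb.neg.tsum_eq] at this
  linarith

lemma ggW_neg : ggW (9/10) < 0 := by
  have hπ : (0:ℝ) < π := Real.pi_pos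
  have hS1 : HasSum (fun n : ℕ => ((n:ℝ)+1) * (-(9/10:ℝ))^n) (100/361) := by
    have := hasSum_np1_geo (q := -(9/10:ℝ))
      (by rw [abs_neg, abs_of_nonneg (by norm_num : (0:ℝ) ≤ 9/10)]; norm_num)
    convert this using 1
    norm_num
  have hT : HasSum ttW (∑' n, ttW n) := ttW_summable.hasSum
  have hsub := (hS1.sub hT).mul_left (1/π)
  have hkey : (fun n : ℕ => 1/π * ((((n:ℝ)+1) * (-(9/10:ℝ))^n) - ttW n))
      = fun n : ℕ => ((n:ℝ)+1) / (π * ddW n) * (-(9/10:ℝ))^n := by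
    funext n
    have hd' : ddW n ≠ 0 := ne_of_gt (ddW_pos n)
    have hπ' : π ≠ 0 := ne_of_gt Real.pi_pos
    unfold ttW
    have h9 : (90:ℝ)*(1/100)^(n+1) = ddW n - 1 := by unfold ddW; ring
    rw [h9]
    field_simp
    ring
  rw [hkey] at hsub
  have hgg : ggW (9/10) = 1/π * (100/361 - ∑' n, ttW n) := hsub.tsum_eq
  have hlb := ttW_sum_lb
  have hneg : 100/361 - ∑' n, ttW n < 0 := by
    have : (100:ℝ)/361 - (9/19 - (1/(1-(9/1000:ℝ))^2 - 1) * (9/10)) < 0 := by norm_num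
    linarith
  rw [hgg]
  have h1π : (0:ℝ) < 1/π := by positivity
  nlinarith

lemma ggW_exists_zero : ∃ s ∈ Set.Icc (0:ℝ) (9/10), ggW s = 0 := by
  have h := intermediate_value_Icc' (by norm_num : (0:ℝ) ≤ 9/10) ggW_cont
  have h0 : (0:ℝ) ∈ Set.Icc (ggW (9/10)) (ggW 0) :=
    ⟨le_of_lt ggW_neg, le_of_lt ggW_zero_pos⟩
  obtain ⟨s, hs, hgs⟩ := h h0
  exact ⟨s, hs, hgs⟩

theorem stmt_6 :
    ∃ lam : ℝ → ℝ, Measurable lam ∧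
      (∃ C : ℝ, 0 < C ∧ ∀ r ∈ Set.Ico (0:ℝ) 1, 1 / C ≤ lam r ∧ lam r ≤ C) ∧
      ∃ z w : ℂ, ‖z‖ < 1 ∧ ‖w‖ < 1 ∧
        ∑' n : ℕ, ((1 / (2 * π * ∫ r in (0:ℝ)..1, r ^ (2*n+1) * lam r) : ℝ) : ℂ)
            * (z * (starRingEnd ℂ) w) ^ n = 0 := by
  refine ⟨lamW, lamW_meas, ⟨91, by norm_num, fun r _ => ?_⟩, ?_⟩
  · unfold lamW; split_ifs <;> norm_num
  obtain ⟨s, hs, hgs⟩ := ggW_exists_zero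
  set ρ : ℝ := Real.sqrt s with hρ
  have hρ0 : 0 ≤ ρ := Real.sqrt_nonneg s
  have hρ2 : ρ ^ 2 = s := Real.sq_sqrt hs.1
  have hρ1 : ρ < 1 := by nlinarith [hs.2]
  refine ⟨-(ρ:ℂ), (ρ:ℂ), ?_, ?_, ?_⟩
  · rw [norm_neg, Complex.norm_real, Real.norm_eq_abs, abs_of_nonneg hρ0]; exact hρ1
  · rw [Complex.norm_real, Real.norm_eq_abs, abs_of_nonneg hρ0]; exact hρ1
  have hzw : -(ρ:ℂ) * (starRingEnd ℂ) (ρ:ℂ) = ((-s : ℝ) : ℂ) := by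
    rw [Complex.conj_ofReal]
    push_cast
    rw [← hρ2]
    push_cast
    ring
  rw [hzw]
  have hterm : ∀ n : ℕ,
      ((1 / (2 * π * ∫ r in (0:ℝ)..1, r ^ (2*n+1) * lamW r) : ℝ) : ℂ) * (((-s : ℝ) : ℂ)) ^ n
        = ((((n:ℝ)+1) / (π * ddW n) * (-s)^n : ℝ) : ℂ) := by
    intro n
    rw [lamW_int n]
    have hπ' : π ≠ 0 := ne_of_gt Real.pi_pos
    have hd' : ddW n ≠ 0 := ne_of_gt (ddW_pos n)
    have h2 : (2*(n:ℝ)+2) ≠ 0 := by positivity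
    have hcoef : (1 / (2 * π * ((1 + 90*(1/100:ℝ)^(n+1)) / (2*(n:ℝ)+2))) : ℝ)
        = ((n:ℝ)+1) / (π * ddW n) := by
      unfold ddW
      rw [div_eq_div_iff (by
        have h3 : (0:ℝ) < 1 + 90*(1/100:ℝ)^(n+1) := by positivity
        have h4 : (0:ℝ) < (1 + 90*(1/100:ℝ)^(n+1)) / (2*(n:ℝ)+2) := by positivity
        nlinarith [Real.pi_pos]) (by
        have h3 : (0:ℝ) < 1 + 90*(1/100:ℝ)^(n+1) := by positivity
        nlinarith [Real.pi_pos])]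
      field_simp
    rw [hcoef]
    push_cast
    ring
  rw [tsum_congr hterm, ← Complex.ofReal_tsum]
  have : ∑' n : ℕ, ((n:ℝ)+1) / (π * ddW n) * (-s)^n = ggW s := rfl
  rw [this, hgs, Complex.ofReal_zero]
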